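/- For all natural numbers n, m, the assignment f ↦ E f is a bijection from the set of monotone functions Fin n → Fin m onto the set of monotone functions Fin (m+1) → Fin (n+1) that send 0 to 0 and Fin.last m to Fin.last n. (Proposition 7.3: the functor e : Δᵒᵖ → Δ is faithful with image the subcategory of Δ on the objects [n], n ≥ 1, whose morphisms are the endpoint-preserving maps.) -/

import Mathlib

/-- The décalage-like shift of a map `f : Fin n → Fin m`:
`(E f) i` is the number of indices `k : Fin n` with `(f k : ℕ) < (i : ℕ)`. -/
def E {n m : ℕ} (f : Fin n → Fin m) : Fin (m + 1) → Fin (n + 1) :=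
  fun i =>
    ⟨(Finset.univ.filter (fun k : Fin n => (f k : ℕ) < (i : ℕ))).card,
      Nat.lt_succ_of_le ((Finset.card_filter_le _ _).trans (by simp))⟩

lemma lowerset_mem_iff {N : ℕ} (p : Fin N → Prop) [DecidablePred p]
    (hp : ∀ ⦃j j' : Fin N⦄, j ≤ j' → p j' → p j) (j : Fin N) :
    p j ↔ (j : ℕ) < (Finset.univ.filter p).card := by
  constructor
  · intro h
    have hsub : Finset.Iic j ⊆ Finset.univ.filter p := by
      intro j' hj'
      simp only [Finset.mem_Iic] at hj'
      simp only [Finset.mem_filter, Finset.mem_univ, true_and]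
      exact hp hj' h
    have := Finset.card_le_card hsub
    rw [Fin.card_Iic] at this
    omega
  · intro h
    by_contra hpj
    have hsub : Finset.univ.filter p ⊆ Finset.Iio j := by
      intro j' hj'
      simp only [Finset.mem_filter, Finset.mem_univ, true_and] at hj'
      simp only [Finset.mem_Iio]
      by_contra hlt
      exact hpj (hp (le_of_not_gt hlt) hj')
    have := Finset.card_le_card hsub
    rw [Fin.card_Iio] at this
    omega

lemma card_filter_lt {n c : ℕ} (hc : c ≤ n) :
    (Finset.univ.filter (fun k : Fin n => (k : ℕ) < c)).card = c := by
  induction c with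
  | zero => simp
  | succ c ih =>
    have hc' : c ≤ n := Nat.le_of_succ_le hc
    have : (Finset.univ.filter (fun k : Fin n => (k : ℕ) < c + 1))
        = insert (⟨c, hc⟩ : Fin n) (Finset.univ.filter (fun k : Fin n => (k : ℕ) < c)) := by
      ext k
      simp only [Finset.mem_filter, Finset.mem_univ, true_and, Finset.mem_insert, Fin.ext_iff]
      omega
    rw [this, Finset.card_insert_of_notMem (by simp), ih hc']

lemma E_key {n m : ℕ} {f : Fin n → Fin m} (hf : Monotone f) (i : Fin (m + 1)) (k : Fin n) :
    (f k : ℕ) < (i : ℕ) ↔ (k : ℕ) < (E f i : ℕ) := by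
  exact lowerset_mem_iff (fun k => (f k : ℕ) < (i : ℕ))
    (fun j j' hle h => lt_of_le_of_lt (by exact_mod_cast hf hle) h) k

lemma E_monotone {n m : ℕ} (f : Fin n → Fin m) : Monotone (E f) := by
  intro i j hij
  show (Finset.univ.filter (fun k : Fin n => (f k : ℕ) < (i : ℕ))).card ≤ (Finset.univ.filter (fun k : Fin n => (f k : ℕ) < (j : ℕ))).card
  apply Finset.card_le_card
  intro k hk
  simp only [Finset.mem_filter, Finset.mem_univ, true_and] at hk ⊢
  exact lt_of_lt_of_le hk hij

lemma E_zero {n m : ℕ} (f : Fin n → Fin m) : E f 0 = 0 := by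
  simp [E, Fin.ext_iff]

lemma E_last {n m : ℕ} (f : Fin n → Fin m) : E f (Fin.last m) = Fin.last n := by
  simp [E, Fin.ext_iff, Fin.is_lt]

/-- inverse map -/
def Ginv {n m : ℕ} (F : Fin (m + 1) → Fin (n + 1)) (h0 : F 0 = 0)
    (hl : F (Fin.last m) = Fin.last n) (k : Fin n) : Fin m := by
  refine ⟨(Finset.univ.filter (fun j : Fin m => (F j.succ : ℕ) ≤ (k : ℕ))).card, ?_⟩
  match m, F, h0, hl with
  | 0, F, h0, hl =>
    exfalso
    have h1 : (Fin.last 0 : Fin 1) = 0 := rfl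
    rw [h1, h0] at hl
    have hn : n = 0 := by
      have := congrArg Fin.val hl
      simpa [Fin.last] using this.symm
    have := k.is_lt
    omega
  | (m' + 1), F, h0, hl =>
    have hne : (Fin.last m' : Fin (m' + 1)) ∉
        (Finset.univ.filter (fun j : Fin (m' + 1) => (F j.succ : ℕ) ≤ (k : ℕ))) := by
      simp only [Finset.mem_filter, Finset.mem_univ, true_and, not_le]
      have : (Fin.last m').succ = Fin.last (m' + 1) := rfl
      rw [this, hl]
      simp [Fin.last]
    calc (Finset.univ.filter (fun j : Fin (m' + 1) => (F j.succ : ℕ) ≤ (k : ℕ))).card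
        < Fintype.card (Fin (m' + 1)) :=
          Finset.card_lt_card (Finset.ssubset_univ_iff.mpr
            (fun h => hne (by rw [h]; exact Finset.mem_univ _)))
      _ = m' + 1 := Fintype.card_fin _

lemma Ginv_key {n m : ℕ} {F : Fin (m + 1) → Fin (n + 1)} (hF : Monotone F)
    (h0 : F 0 = 0) (hl : F (Fin.last m) = Fin.last n) (i : Fin (m + 1)) (k : Fin n) :
    (Ginv F h0 hl k : ℕ) < (i : ℕ) ↔ (k : ℕ) < (F i : ℕ) := by
  have hlow : ∀ ⦃j j' : Fin m⦄, j ≤ j' → (F j'.succ : ℕ) ≤ (k : ℕ) → (F j.succ : ℕ) ≤ (k : ℕ) :=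
    fun j j' hle h => le_trans (by exact_mod_cast hF (Fin.succ_le_succ_iff.mpr hle)) h
  have key := fun j => lowerset_mem_iff (fun j : Fin m => (F j.succ : ℕ) ≤ (k : ℕ)) hlow j
  induction i using Fin.cases with
  | zero =>
    simp [h0]
  | succ j =>
    have h1 : ((j.succ : Fin (m+1)) : ℕ) = (j : ℕ) + 1 := rfl
    rw [h1]
    have hval : (Ginv F h0 hl k : ℕ)
        = (Finset.univ.filter (fun j : Fin m => (F j.succ : ℕ) ≤ (k : ℕ))).card := rfl
    have kj := key j
    rw [← hval] at kj
    constructor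
    · intro h
      have : ¬ ((j : ℕ) < (Ginv F h0 hl k : ℕ)) := by omega
      have := (not_iff_not.mpr kj).mpr this
      omega
    · intro h
      have : ¬ ((F j.succ : ℕ) ≤ (k : ℕ)) := by omega
      have := (not_iff_not.mpr kj).mp this
      omega

lemma Ginv_mono {n m : ℕ} {F : Fin (m + 1) → Fin (n + 1)} (h0 : F 0 = 0)
    (hl : F (Fin.last m) = Fin.last n) : Monotone (Ginv F h0 hl) := by
  intro k k' hkk
  have : (Ginv F h0 hl k : ℕ) ≤ (Ginv F h0 hl k' : ℕ) := by
    show (Finset.univ.filter (fun j : Fin m => (F j.succ : ℕ) ≤ (k : ℕ))).card ≤ (Finset.univ.filter (fun j : Fin m => (F j.succ : ℕ) ≤ (k' : ℕ))).card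
    apply Finset.card_le_card
    intro j hj
    simp only [Finset.mem_filter, Finset.mem_univ, true_and] at hj ⊢
    exact le_trans hj (by exact_mod_cast hkk)
  exact this

lemma E_Ginv {n m : ℕ} {F : Fin (m + 1) → Fin (n + 1)} (hF : Monotone F)
    (h0 : F 0 = 0) (hl : F (Fin.last m) = Fin.last n) :
    E (Ginv F h0 hl) = F := by
  funext i
  apply Fin.ext
  show (Finset.univ.filter (fun k : Fin n => (Ginv F h0 hl k : ℕ) < (i : ℕ))).card = (F i : ℕ)
  have : (Finset.univ.filter (fun k : Fin n => (Ginv F h0 hl k : ℕ) < (i : ℕ)))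
      = (Finset.univ.filter (fun k : Fin n => (k : ℕ) < (F i : ℕ))) := by
    ext k
    simp only [Finset.mem_filter, Finset.mem_univ, true_and]
    exact Ginv_key hF h0 hl i k
  rw [this, card_filter_lt (Nat.lt_succ_iff.mp (F i).is_lt)]

lemma Ginv_E {n m : ℕ} {f : Fin n → Fin m} (hf : Monotone f)
    (h0 : E f 0 = 0) (hl : E f (Fin.last m) = Fin.last n) : Ginv (E f) h0 hl = f := by
  funext k
  apply Fin.ext
  show (Finset.univ.filter (fun j : Fin m => (E f j.succ : ℕ) ≤ (k : ℕ))).card = (f k : ℕ)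
  have : (Finset.univ.filter (fun j : Fin m => (E f j.succ : ℕ) ≤ (k : ℕ)))
      = (Finset.univ.filter (fun j : Fin m => (j : ℕ) < (f k : ℕ))) := by
    ext j
    simp only [Finset.mem_filter, Finset.mem_univ, true_and]
    have := E_key hf j.succ k
    have h1 : ((j.succ : Fin (m+1)) : ℕ) = (j : ℕ) + 1 := rfl
    rw [h1] at this
    omega
  rw [this, card_filter_lt (le_of_lt (f k).is_lt)]

theorem stmt4 (n m : ℕ) :
    ∃ e : {f : Fin n → Fin m // Monotone f} ≃
        {F : Fin (m + 1) → Fin (n + 1) //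
          Monotone F ∧ F 0 = 0 ∧ F (Fin.last m) = Fin.last n},
      ∀ f : {f : Fin n → Fin m // Monotone f},
        ((e f : {F : Fin (m + 1) → Fin (n + 1) //
          Monotone F ∧ F 0 = 0 ∧ F (Fin.last m) = Fin.last n}) :
            Fin (m + 1) → Fin (n + 1)) = E f.1 := by
  refine ⟨⟨fun f => ⟨E f.1, E_monotone f.1, E_zero f.1, E_last f.1⟩,
    fun F => ⟨Ginv F.1 F.2.2.1 F.2.2.2, Ginv_mono F.2.2.1 F.2.2.2⟩, ?_, ?_⟩, fun f => rfl⟩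
  · intro f
    exact Subtype.ext (Ginv_E f.2 (E_zero f.1) (E_last f.1))
  · intro F
    exact Subtype.ext (E_Ginv F.2.1 F.2.2.1 F.2.2.2)
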